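/- If H₁ and H₂ are abstract finite groups of the same cardinality d such that for every natural number n the number of elements of order n in H₁ equals that in H₂, then, embedding H₁ and H₂ into the symmetric group S_d via their left regular representations, every conjugacy class of S_d intersects the images of H₁ and H₂ in the same number of elements. -/

import Mathlib

open Equiv Equiv.Perm Multiset Finset

private lemma regEmb_pow {G : Type} [Group G] {d : ℕ} (e : G ≃ Fin d) (h : G) (k : ℕ) :
    ((e.symm.trans (Equiv.mulLeft h)).trans e) ^ k
      = (e.symm.trans (Equiv.mulLeft (h ^ k))).trans e := by
  induction k with
  | zero => ext x; simp
  | succ k ih =>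
      ext x
      simp [pow_succ, Equiv.Perm.mul_apply, ih, mul_assoc]

private lemma cycleType_of_free {α : Type} [Fintype α] [DecidableEq α]
    (g : Equiv.Perm α) (n : ℕ) (hn : 2 ≤ n)
    (hfree : ∀ (k : ℕ) (x : α), (g ^ k) x = x ↔ n ∣ k) :
    g.cycleType = Multiset.replicate (Fintype.card α / n) n := by
  have hmem : ∀ m ∈ g.cycleType, m = n := by
    intro m hm
    rw [Equiv.Perm.cycleType, Multiset.mem_map] at hm
    obtain ⟨c, hc, rfl⟩ := hm
    have hc' : c ∈ g.cycleFactorsFinset := hc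
    have hcyc : c.IsCycle := (Equiv.Perm.mem_cycleFactorsFinset_iff.mp hc').1
    obtain ⟨x, hx1, -⟩ := id hcyc
    have hxs : x ∈ c.support := Equiv.Perm.mem_support.mpr hx1
    have hcx : c = g.cycleOf x := Equiv.Perm.cycle_is_cycleOf hxs hc'
    have hcn : c ^ n = 1 := by
      ext y
      by_cases hy : c y = y
      · simp [Equiv.Perm.pow_apply_eq_self_of_apply_eq_self hy]
      · have hcy : c = g.cycleOf y :=
          Equiv.Perm.cycle_is_cycleOf (Equiv.Perm.mem_support.mpr hy) hc'
        rw [hcy, Equiv.Perm.cycleOf_pow_apply_self]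
        simpa using (hfree n y).mpr dvd_rfl
    have h1 : orderOf c ∣ n := orderOf_dvd_of_pow_eq_one hcn
    have h2 : n ∣ orderOf c := by
      have hgx : (g ^ orderOf c) x = x := by
        rw [← Equiv.Perm.cycleOf_pow_apply_self g x (orderOf c), ← hcx,
          pow_orderOf_eq_one]
        rfl
      exact (hfree _ x).mp hgx
    have hord : orderOf c = n := Nat.dvd_antisymm h1 h2
    simp only [Function.comp_apply]
    rw [← hcyc.orderOf]
    exact hord
  have hsupp : g.support = Finset.univ := by
    ext x
    simp only [Finset.mem_univ, iff_true, Equiv.Perm.mem_support]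
    intro hx
    have : n ∣ 1 := (hfree 1 x).mp (by simpa using hx)
    have := Nat.le_of_dvd one_pos this
    omega
  have hsum : g.cycleType.sum = Fintype.card α := by
    rw [Equiv.Perm.sum_cycleType, hsupp, Finset.card_univ]
  have hrep : g.cycleType = Multiset.replicate (Multiset.card g.cycleType) n :=
    Multiset.eq_replicate_of_mem hmem
  rw [hrep]
  congr 1
  rw [hrep, Multiset.sum_replicate, smul_eq_mul] at hsum
  exact (Nat.div_eq_of_eq_mul_left (by omega) hsum.symm).symm

private lemma cycleType_regEmb {G : Type} [Group G] [Fintype G] {d : ℕ}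
    (hc : Fintype.card G = d) (e : G ≃ Fin d) (h : G) :
    Equiv.Perm.cycleType ((e.symm.trans (Equiv.mulLeft h)).trans e)
      = if orderOf h = 1 then 0
        else Multiset.replicate (d / orderOf h) (orderOf h) := by
  by_cases h1 : orderOf h = 1
  · rw [if_pos h1]
    have : h = 1 := orderOf_eq_one_iff.mp h1
    subst this
    have : (e.symm.trans (Equiv.mulLeft (1 : G))).trans e = 1 := by ext x; simp
    rw [show Equiv.Perm.cycleType ((e.symm.trans (Equiv.mulLeft (1:G))).trans e) = Equiv.Perm.cycleType 1 from congrArg _ this, Equiv.Perm.cycleType_one]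
  · rw [if_neg h1]
    have hn2 : 2 ≤ orderOf h := by
      have := orderOf_pos h
      omega
    have := cycleType_of_free ((e.symm.trans (Equiv.mulLeft h)).trans e) (orderOf h) hn2 ?_
    · rwa [Fintype.card_fin] at this
    · intro k x
      rw [regEmb_pow]
      simp only [Equiv.trans_apply, Equiv.coe_mulLeft]
      rw [orderOf_dvd_iff_pow_eq_one]
      constructor
      · intro hx
        have : h ^ k * e.symm x = e.symm x := by
          have := congrArg e.symm hx
          simpa using this
        rwa [mul_eq_right] at this
      · intro hd
        simp [hd]

private lemma count_orderOf {G : Type} [Group G] [Fintype G] (P : ℕ → Prop) [DecidablePred P] :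
    Nat.card {h : G // P (orderOf h)}
      = ∑ n ∈ Finset.range (Fintype.card G + 1),
          if P n then Nat.card {h : G // orderOf h = n} else 0 := by
  classical
  simp_rw [Nat.card_eq_fintype_card, Fintype.card_subtype]
  rw [Finset.card_eq_sum_card_fiberwise
    (f := fun h : G => orderOf h) (t := Finset.range (Fintype.card G + 1))
    (fun x _ => Finset.mem_range.mpr (Nat.lt_succ_of_le orderOf_le_card_univ))]
  refine Finset.sum_congr rfl fun n _ => ?_
  by_cases hP : P n
  · rw [if_pos hP]
    congr 1
    ext h
    simp only [Finset.mem_filter, Finset.mem_univ, true_and]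
    constructor
    · rintro ⟨-, hh⟩; exact hh
    · intro hh; exact ⟨hh ▸ hP, hh⟩
  · rw [if_neg hP]
    rw [Finset.card_eq_zero]
    ext h
    simp only [Finset.mem_filter, Finset.mem_univ, true_and, Finset.notMem_empty, iff_false]
    rintro ⟨hp, rfl⟩
    exact hP hp

private lemma count_reg {G : Type} [Group G] [Fintype G] {d : ℕ}
    (hc : Fintype.card G = d) (e : G ≃ Fin d) (σ : Equiv.Perm (Fin d)) :
    Nat.card {π : Equiv.Perm (Fin d) //
        (∃ h : G, π = (e.symm.trans (Equiv.mulLeft h)).trans e) ∧ IsConj σ π}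
      = ∑ n ∈ Finset.range (d + 1),
          if σ.cycleType = (if n = 1 then 0 else Multiset.replicate (d / n) n)
          then Nat.card {h : G // orderOf h = n} else 0 := by
  have hbij : Nat.card {π : Equiv.Perm (Fin d) //
        (∃ h : G, π = (e.symm.trans (Equiv.mulLeft h)).trans e) ∧ IsConj σ π}
      = Nat.card {h : G // IsConj σ ((e.symm.trans (Equiv.mulLeft h)).trans e)} := by
    refine (Nat.card_eq_of_bijective
      (fun h => ⟨(e.symm.trans (Equiv.mulLeft h.1)).trans e, ⟨h.1, rfl⟩, h.2⟩) ⟨?_, ?_⟩).symm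
    · rintro ⟨h, hh⟩ ⟨h', hh'⟩ heq
      have := congrArg (fun π : Equiv.Perm (Fin d) => e.symm ((π : Equiv.Perm (Fin d)) (e 1)))
        (Subtype.ext_iff.mp heq)
      simp at this
      exact Subtype.ext this
    · rintro ⟨π, ⟨h, rfl⟩, hconj⟩
      exact ⟨⟨h, hconj⟩, rfl⟩
  rw [hbij]
  have hiff : ∀ h : G, IsConj σ ((e.symm.trans (Equiv.mulLeft h)).trans e)
      ↔ σ.cycleType = (if orderOf h = 1 then 0
          else Multiset.replicate (d / orderOf h) (orderOf h)) := by
    intro h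
    rw [Equiv.Perm.isConj_iff_cycleType_eq, cycleType_regEmb hc]
  calc Nat.card {h : G // IsConj σ ((e.symm.trans (Equiv.mulLeft h)).trans e)}
      = Nat.card {h : G // σ.cycleType
          = (if orderOf h = 1 then 0
             else Multiset.replicate (d / orderOf h) (orderOf h))} := by
        apply Nat.card_congr
        exact Equiv.subtypeEquivRight hiff
    _ = _ := by rw [count_orderOf (fun n => σ.cycleType
            = (if n = 1 then 0 else Multiset.replicate (d / n) n)), hc]

/-- If `H₁` and `H₂` are abstract finite groups of the same cardinality `d`
such that for every natural number `n` the number of elements of order `n` in `H₁` equals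
that in `H₂`, then, embedding `H₁` and `H₂` into the symmetric group `S_d = Perm (Fin d)`
via their left regular representations (after choosing bijections `Hᵢ ≃ Fin d`), every
conjugacy class of `S_d` intersects the images of `H₁` and `H₂` in the same number of
elements. -/
theorem regular_embeddings_gassmann (d : ℕ)
    (H₁ H₂ : Type) [Group H₁] [Group H₂] [Fintype H₁] [Fintype H₂]
    (hc₁ : Nat.card H₁ = d) (hc₂ : Nat.card H₂ = d)
    (horder : ∀ n : ℕ, Nat.card {h : H₁ // orderOf h = n}
                     = Nat.card {h : H₂ // orderOf h = n})
    (e₁ : H₁ ≃ Fin d) (e₂ : H₂ ≃ Fin d) :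
    ∀ σ : Equiv.Perm (Fin d),
      Nat.card {π : Equiv.Perm (Fin d) //
          (∃ h : H₁, π = (e₁.symm.trans (Equiv.mulLeft h)).trans e₁) ∧ IsConj σ π}
      = Nat.card {π : Equiv.Perm (Fin d) //
          (∃ h : H₂, π = (e₂.symm.trans (Equiv.mulLeft h)).trans e₂) ∧ IsConj σ π} := by
  intro σ
  rw [Nat.card_eq_fintype_card] at hc₁ hc₂
  rw [count_reg hc₁ e₁ σ, count_reg hc₂ e₂ σ]
  exact Finset.sum_congr rfl fun n _ => by rw [horder n]
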